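/- Let Z ⊂ k^{2n} be the affine quadric {x₁x′₁ + ⋯ + xₙx′ₙ = 1} with the action of the torus T = (k^×)ⁿ given by t·xᵢ = tᵢxᵢ, t·x′ᵢ = tᵢ⁻¹x′ᵢ. Then the categorical quotient Z ⫽ T is isomorphic to the affine space 𝔸^{n−1}, namely the hyperplane {z₁ + ⋯ + zₙ = 1} in 𝔸ⁿ with coordinates zᵢ = xᵢx′ᵢ. -/

import Mathlib

set_option linter.unusedSectionVars false


variable (k : Type) [Field k] [CharZero k] [IsAlgClosed k] (n : ℕ)

/-- The affine quadric `Z = {x₁x′₁ + ⋯ + xₙx′ₙ = 1} ⊆ k^{2n}` (coordinates indexed by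
`Fin n ⊕ Fin n`, with `inl i ↦ xᵢ` and `inr i ↦ x′ᵢ`). -/
def Quadric : Set ((Fin n ⊕ Fin n) → k) :=
  {v | ∑ i : Fin n, v (Sum.inl i) * v (Sum.inr i) = 1}

/-- The action of the torus `T = (kˣ)ⁿ` on `Z`: `t·xᵢ = tᵢxᵢ`, `t·x′ᵢ = tᵢ⁻¹x′ᵢ`. -/
def torusActZ (t : Fin n → kˣ) (v : Quadric k n) : Quadric k n :=
  ⟨fun s => Sum.elim (fun i => (t i : k) * v.1 (Sum.inl i))
      (fun i => ((t i)⁻¹ : kˣ) * v.1 (Sum.inr i)) s, by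
    have h : ∀ i : Fin n, ((t i : k) * v.1 (Sum.inl i)) *
        (((t i)⁻¹ : kˣ) * v.1 (Sum.inr i)) = v.1 (Sum.inl i) * v.1 (Sum.inr i) := by
      intro i
      have hu : (t i : k) * ((t i)⁻¹ : kˣ) = 1 := by
        rw [← Units.val_mul, mul_inv_cancel, Units.val_one]
      calc ((t i : k) * v.1 (Sum.inl i)) * (((t i)⁻¹ : kˣ) * v.1 (Sum.inr i))
          = ((t i : k) * ((t i)⁻¹ : kˣ)) * (v.1 (Sum.inl i) * v.1 (Sum.inr i)) := by ring
        _ = v.1 (Sum.inl i) * v.1 (Sum.inr i) := by rw [hu, one_mul]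
    have hv := v.2
    simp only [Quadric, Set.mem_setOf_eq, Sum.elim_inl, Sum.elim_inr] at *
    rw [Finset.sum_congr rfl fun i _ => h i, hv]⟩

/-- The algebra of regular functions on `Z`: restrictions of polynomial functions,
i.e. the subalgebra of `Z → k` generated by the coordinate functions. -/
def regularFnsZ : Subalgebra k (Quadric k n → k) :=
  Algebra.adjoin k (Set.range fun s : Fin n ⊕ Fin n => fun v : Quadric k n => v.1 s)

/-- The `T`-invariant functions on `Z`. -/
def invFnsZ : Subalgebra k (Quadric k n → k) where
  carrier := {φ | ∀ (t : Fin n → kˣ) (v : Quadric k n), φ (torusActZ k n t v) = φ v}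
  mul_mem' := by intro a b ha hb t v; simp [Pi.mul_apply, ha t v, hb t v]
  add_mem' := by intro a b ha hb t v; simp [Pi.add_apply, ha t v, hb t v]
  algebraMap_mem' := by intro c t v; rfl


namespace S12
variable {k n}

/-- z_i = x_i x'_i as a function on the quadric. -/
def zFn (i : Fin n) : Quadric k n → k := fun v => v.1 (Sum.inl i) * v.1 (Sum.inr i)

/-- The weight of a monomial. -/
def wt (m : (Fin n ⊕ Fin n) →₀ ℕ) : Fin n → ℤ := fun i => (m (Sum.inl i) : ℤ) - m (Sum.inr i)

/-- The character of the torus attached to a weight. -/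
def chi (w : Fin n → ℤ) : (Fin n → kˣ) →* k where
  toFun t := ∏ i, ((t i ^ w i : kˣ) : k)
  map_one' := by simp
  map_mul' a b := by
    simp only [Pi.mul_apply, mul_zpow, Units.val_mul, ← Finset.prod_mul_distrib]

lemma chi_zero_apply (t : Fin n → kˣ) : chi (k := k) 0 t = 1 := by simp [chi]

lemma not_isOfFinOrder_two : ¬ IsOfFinOrder (Units.mk0 (2:k) two_ne_zero) := by
  rw [isOfFinOrder_iff_pow_eq_one]
  rintro ⟨m, hm, h⟩
  have : ((2:k))^m = 1 := by
    have := congrArg (Units.val) h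
    simpa using this
  have h2 : ((2^m : ℕ) : k) = ((1:ℕ):k) := by push_cast; simpa using this
  have := Nat.cast_injective (R := k) h2
  have : m = 0 := by
    by_contra hm0
    have : 2^m ≥ 2^1 := Nat.pow_le_pow_right (by norm_num) (by omega)
    omega
  omega

lemma chi_injective : Function.Injective (chi (k := k) (n := n)) := by
  intro w w' h
  funext i
  set u : kˣ := Units.mk0 (2:k) two_ne_zero with hu
  have ht := DFunLike.congr_fun h (Function.update (1 : Fin n → kˣ) i u)
  simp only [chi, MonoidHom.coe_mk, OneHom.coe_mk] at ht
  rw [Finset.prod_eq_single i (fun j _ hj => by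
        simp [Function.update_of_ne hj])
      (by simp),
    Finset.prod_eq_single i (fun j _ hj => by
        simp [Function.update_of_ne hj])
      (by simp)] at ht
  simp only [Function.update_self] at ht
  have : u ^ w i = u ^ w' i := Units.ext ht
  exact (injective_zpow_iff_not_isOfFinOrder.2 not_isOfFinOrder_two) this
open MvPolynomial

/-- torusActZ coordinate values -/
lemma torus_coord_inl (t : Fin n → kˣ) (v : Quadric k n) (i : Fin n) :
    (torusActZ k n t v).1 (Sum.inl i) = (t i : k) * v.1 (Sum.inl i) := rfl

lemma torus_coord_inr (t : Fin n → kˣ) (v : Quadric k n) (i : Fin n) :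
    (torusActZ k n t v).1 (Sum.inr i) = ((t i)⁻¹ : kˣ) * v.1 (Sum.inr i) := rfl

lemma unit_pow_mul (u : kˣ) (a b : ℕ) :
    ((u : k)) ^ a * (((u⁻¹ : kˣ)) : k) ^ b = ((u ^ ((a : ℤ) - b) : kˣ) : k) := by
  rw [zpow_sub, zpow_natCast, zpow_natCast]
  push_cast
  ring

/-- The monomial value at a torus translate. -/
lemma monom_torus (t : Fin n → kˣ) (v : Quadric k n) (m : (Fin n ⊕ Fin n) →₀ ℕ) :
    (∏ s, (torusActZ k n t v).1 s ^ m s)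
      = chi (wt m) t * ∏ s, v.1 s ^ m s := by
  rw [Fintype.prod_sum_type, Fintype.prod_sum_type (fun s => v.1 s ^ m s)]
  simp only [torus_coord_inl, torus_coord_inr, mul_pow]
  rw [Finset.prod_mul_distrib, Finset.prod_mul_distrib]
  have : (∏ i, ((t i : k)) ^ m (Sum.inl i)) * (∏ i, (((t i)⁻¹ : kˣ) : k) ^ m (Sum.inr i))
      = chi (wt m) t := by
    rw [← Finset.prod_mul_distrib]
    exact Finset.prod_congr rfl fun i _ => unit_pow_mul (t i) _ _
  rw [← this]
  ring

/-- Key: an invariant polynomial function equals the weight-zero part. -/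
lemma key (P : MvPolynomial (Fin n ⊕ Fin n) k)
    (hinv : ∀ (t : Fin n → kˣ) (v : Quadric k n),
      eval (torusActZ k n t v).1 P = eval v.1 P) (v : Quadric k n) :
    eval v.1 P = ∑ m ∈ P.support.filter (fun m => wt m = 0),
      P.coeff m * ∏ s, v.1 s ^ m s := by
  classical
  set W : Finset (Fin n → ℤ) := insert 0 (P.support.image wt) with hW
  set c : (Fin n → ℤ) → k := fun w =>
    ∑ m ∈ P.support.filter (fun m => wt m = w), P.coeff m * ∏ s, v.1 s ^ m s with hc
  set g : (Fin n → ℤ) → k := fun w => c w - (if w = 0 then eval v.1 P else 0) with hg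
  have hsum : ∑ w ∈ W, g w • (⇑(chi w) : (Fin n → kˣ) → k) = 0 := by
    have hgw : ∀ w, g w = c w - (if w = 0 then eval v.1 P else 0) := fun w => rfl
    funext t
    have e1 : eval (torusActZ k n t v).1 P = ∑ w ∈ W, c w * chi w t := by
      rw [eval_eq']
      rw [← Finset.sum_fiberwise_of_maps_to (g := wt) (t := W)
        (fun m hm => Finset.mem_insert_of_mem (Finset.mem_image_of_mem wt hm))]
      refine Finset.sum_congr rfl fun w _ => ?_
      rw [hc, Finset.sum_mul]
      refine Finset.sum_congr rfl fun m hm => ?_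
      rw [monom_torus, (Finset.mem_filter.1 hm).2]
      ring
    have e0 : (0:k) = eval (torusActZ k n t v).1 P - eval v.1 P := by rw [hinv t v]; ring
    simp only [Finset.sum_apply, Pi.smul_apply, smul_eq_mul, Pi.zero_apply]
    rw [Finset.sum_congr rfl (fun w _ => by rw [hgw w, sub_mul] :
      ∀ w ∈ W, g w * chi w t = c w * chi w t - (if w = 0 then eval v.1 P else 0) * chi w t)]
    rw [Finset.sum_sub_distrib, ← e1]
    have : ∑ w ∈ W, (if w = 0 then eval v.1 P else 0) * chi w t = eval v.1 P := by
      rw [Finset.sum_eq_single (0 : Fin n → ℤ)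
        (fun w _ hw => by rw [if_neg hw, zero_mul])
        (fun h => absurd (Finset.mem_insert_self _ _) h)]
      rw [if_pos rfl, chi_zero_apply, mul_one]
    rw [this, hinv t v, sub_self]
  have hli : LinearIndependent k (fun w : Fin n → ℤ => (⇑(chi (k := k) w) : (Fin n → kˣ) → k)) :=
    (linearIndependent_monoidHom (Fin n → kˣ) k).comp chi chi_injective
  have h0 : g 0 = 0 := linearIndependent_iff'.1 hli W g hsum 0 (Finset.mem_insert_self _ _)
  have hg0 : g 0 = c 0 - eval v.1 P := by rw [hg]; simp
  rw [hg0] at h0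
  have hc0 : c 0 = ∑ m ∈ P.support.filter (fun m => wt m = 0),
      P.coeff m * ∏ s, v.1 s ^ m s := rfl
  rw [← hc0]
  linear_combination -h0

/-- Evaluating an `aeval` into a function algebra pointwise. -/
lemma aeval_fn_apply {σ X : Type} (f : σ → (X → k)) (P : MvPolynomial σ k) (x : X) :
    aeval f P x = eval (fun s => f s x) P := by
  have h := comp_aeval (f := f) (Pi.evalAlgHom k (fun _ : X => k) x)
  have h2 := congrFun (congrArg (fun (g : MvPolynomial σ k →ₐ[k] k) =>
    (g : MvPolynomial σ k → k)) h) P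
  simp only [AlgHom.coe_comp, Function.comp_apply, Pi.evalAlgHom_apply] at h2
  rw [h2, aeval_def, eval, Algebra.algebraMap_self]
  rfl

lemma inv_mem_adjoin_z (φ : Quadric k n → k)
    (hreg : φ ∈ regularFnsZ k n) (hinv : φ ∈ invFnsZ k n) :
    φ ∈ Algebra.adjoin k (Set.range (zFn (k := k) (n := n))) := by
  classical
  rw [regularFnsZ, Algebra.adjoin_range_eq_range_aeval] at hreg
  obtain ⟨P, hP⟩ := hreg
  have hP' : aeval (fun s (v : Quadric k n) => v.1 s) P = φ := hP
  have hinv'' : ∀ (t : Fin n → kˣ) (v : Quadric k n), φ (torusActZ k n t v) = φ v := hinv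
  have hev : ∀ v : Quadric k n, φ v = eval v.1 P := by
    intro v; rw [← hP', aeval_fn_apply]
  have hinv' : ∀ (t : Fin n → kˣ) (v : Quadric k n),
      eval (torusActZ k n t v).1 P = eval v.1 P := by
    intro t v; rw [← hev, ← hev, hinv'' t v]
  set F := P.support.filter (fun m => wt m = 0) with hF
  set Q : MvPolynomial (Fin n) k := ∑ m ∈ F, monomial
    (Finsupp.equivFunOnFinite.symm fun i => m (Sum.inl i)) (P.coeff m) with hQ
  have hQφ : aeval zFn Q = φ := by
    funext v
    rw [aeval_fn_apply, hev v, key P hinv' v, hQ, map_sum]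
    refine Finset.sum_congr rfl fun m hm => ?_
    have hm0 : ∀ i, m (Sum.inl i) = m (Sum.inr i) := by
      intro i
      have h1 := congrFun (Finset.mem_filter.1 hm).2 i
      simp only [wt, Pi.zero_apply, sub_eq_zero] at h1
      exact_mod_cast h1
    rw [eval_monomial, Finsupp.prod_pow]
    simp only [Finsupp.coe_equivFunOnFinite_symm, zFn, mul_pow]
    rw [Finset.prod_mul_distrib, Fintype.prod_sum_type (fun s => v.1 s ^ m s)]
    have h2 : (∏ x : Fin n, v.1 (Sum.inr x) ^ m (Sum.inl x))
        = ∏ x : Fin n, v.1 (Sum.inr x) ^ m (Sum.inr x) :=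
      Finset.prod_congr rfl fun i _ => by rw [hm0 i]
    rw [h2]
  rw [Algebra.adjoin_range_eq_range_aeval]
  exact ⟨Q, hQφ⟩

/-- Embedding of `Fin (n-1)` into `Fin n`. -/
def emb (j : Fin (n - 1)) : Fin n := ⟨j.val, by have := j.2; omega⟩

/-- The candidate presentation map `k[X_1,…,X_{n-1}] → Fun(Z)`, `X_j ↦ z_j`. -/
noncomputable def psi : MvPolynomial (Fin (n - 1)) k →ₐ[k] (Quadric k n → k) :=
  aeval (fun j : Fin (n - 1) => zFn (emb j))

lemma sum_split (hn : 1 ≤ n) {M : Type} [AddCommMonoid M] (f : Fin n → M)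
    (i : Fin n) (hi : (i : ℕ) = n - 1) :
    ∑ i', f i' = (∑ j : Fin (n - 1), f (emb j)) + f i := by
  have h : n - 1 + 1 = n := by omega
  rw [← Fintype.sum_equiv (finCongr h) (fun a => f (finCongr h a)) f (fun a => rfl)]
  rw [Fin.sum_univ_castSucc]
  have e1 : ∀ j : Fin (n - 1), f (finCongr h j.castSucc) = f (emb j) :=
    fun j => congrArg f (Fin.ext rfl)
  have e2 : f (finCongr h (Fin.last (n - 1))) = f i := congrArg f (Fin.ext (by simp [hi]))
  rw [Finset.sum_congr rfl fun j _ => e1 j, e2]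

lemma sum_z (v : Quadric k n) : ∑ i, zFn i v = 1 := v.2

lemma z_mem_range (hn : 1 ≤ n) (i : Fin n) : zFn i ∈ (psi (k := k) (n := n)).range := by
  by_cases h : (i : ℕ) < n - 1
  · exact ⟨X ⟨i.val, h⟩, aeval_X _ _⟩
  · have hi : (i : ℕ) = n - 1 := by have := i.2; omega
    have hfun : zFn i = (1 : Quadric k n → k) - ∑ j : Fin (n - 1), zFn (emb j) := by
      funext v
      have h0 := sum_split hn (fun i' => zFn i' v) i hi
      rw [sum_z v] at h0
      have h3 : (∑ j : Fin (n - 1), zFn (emb j) v) + zFn i v = 1 := by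
        simpa using h0.symm
      simp only [Pi.sub_apply, Pi.one_apply, Finset.sum_apply]
      linear_combination h3
    rw [hfun]
    exact sub_mem (one_mem _) (sum_mem fun j _ => ⟨X j, aeval_X _ _⟩)

lemma z_inv (i : Fin n) (t : Fin n → kˣ) (v : Quadric k n) :
    zFn i (torusActZ k n t v) = zFn i v := by
  show ((t i : k) * v.1 (Sum.inl i)) * (((t i)⁻¹ : kˣ) * v.1 (Sum.inr i))
    = v.1 (Sum.inl i) * v.1 (Sum.inr i)
  have hu : (t i : k) * ((t i)⁻¹ : kˣ) = 1 := by
    rw [← Units.val_mul, mul_inv_cancel, Units.val_one]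
  calc ((t i : k) * v.1 (Sum.inl i)) * (((t i)⁻¹ : kˣ) * v.1 (Sum.inr i))
      = ((t i : k) * ((t i)⁻¹ : kˣ)) * (v.1 (Sum.inl i) * v.1 (Sum.inr i)) := by ring
    _ = v.1 (Sum.inl i) * v.1 (Sum.inr i) := by rw [hu, one_mul]

lemma z_mem_inf (i : Fin n) : zFn i ∈ regularFnsZ k n ⊓ invFnsZ k n := by
  constructor
  · exact mul_mem (Algebra.subset_adjoin ⟨Sum.inl i, rfl⟩)
      (Algebra.subset_adjoin ⟨Sum.inr i, rfl⟩)
  · exact fun t v => z_inv i t v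

lemma psi_range_eq (hn : 1 ≤ n) :
    (psi (k := k) (n := n)).range = regularFnsZ k n ⊓ invFnsZ k n := by
  apply le_antisymm
  · rw [psi, ← Algebra.adjoin_range_eq_range_aeval]
    apply Algebra.adjoin_le
    rintro _ ⟨j, rfl⟩
    exact z_mem_inf (emb j)
  · rintro φ ⟨hreg, hinv⟩
    have h1 : φ ∈ Algebra.adjoin k (Set.range (zFn (k := k) (n := n))) :=
      inv_mem_adjoin_z φ hreg hinv
    have h2 : Algebra.adjoin k (Set.range (zFn (k := k) (n := n)))
        ≤ (psi (k := k) (n := n)).range := by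
      apply Algebra.adjoin_le
      rintro _ ⟨i, rfl⟩
      exact z_mem_range hn i
    exact h2 h1

/-- The point of the quadric with `x_j = c_j` (`j < n-1`), `x_{n-1} = 1 - ∑ c_j`, all `x'_i = 1`. -/
def pt (hn : 1 ≤ n) (c : Fin (n - 1) → k) : Quadric k n := by
  refine ⟨Sum.elim (fun i => if h : (i : ℕ) < n - 1 then c ⟨i.val, h⟩ else 1 - ∑ j, c j)
    (fun _ => 1), ?_⟩
  show ∑ i : Fin n, _ * _ = 1
  simp only [Sum.elim_inl, Sum.elim_inr, mul_one]
  rw [sum_split hn _ (⟨n - 1, by omega⟩ : Fin n) rfl]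
  rw [dif_neg (lt_irrefl _)]
  have : ∀ j : Fin (n - 1), (if h : ((emb j : Fin n) : ℕ) < n - 1
      then c ⟨(emb j : Fin n).val, h⟩ else 1 - ∑ j, c j) = c j := by
    intro j
    rw [dif_pos (show ((emb j : Fin n) : ℕ) < n - 1 from j.2)]
    exact congrArg c (Fin.ext rfl)
  rw [Finset.sum_congr rfl fun j _ => this j]
  ring

lemma z_pt (hn : 1 ≤ n) (c : Fin (n - 1) → k) (j : Fin (n - 1)) :
    zFn (emb j) (pt hn c) = c j := by
  show (if h : ((emb j : Fin n) : ℕ) < n - 1 then c ⟨(emb j : Fin n).val, h⟩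
    else 1 - ∑ j, c j) * 1 = c j
  rw [mul_one, dif_pos (show ((emb j : Fin n) : ℕ) < n - 1 from j.2)]
  exact congrArg c (Fin.ext rfl)

lemma psi_inj (hn : 1 ≤ n) : Function.Injective (psi (k := k) (n := n)) := by
  rw [injective_iff_map_eq_zero]
  intro Q hQ
  apply MvPolynomial.funext (q := 0)
  intro c
  have h1 : aeval (fun j : Fin (n - 1) => zFn (emb j)) Q (pt hn c) = 0 :=
    congrFun hQ (pt hn c)
  rw [aeval_fn_apply] at h1
  rw [map_zero]
  have hz : (fun j => zFn (emb j) (pt hn c)) = c := funext fun j => z_pt hn c j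
  rw [← hz]
  exact h1

end S12

/-- the categorical quotient `Z ⫽ T` of the quadric
`{x₁x′₁ + ⋯ + xₙx′ₙ = 1}` by the torus `T = (kˣ)ⁿ`, i.e. the algebra of `T`-invariant
regular functions on `Z`, is (the algebra of functions on) an affine space `𝔸^{n−1}`:
it is isomorphic to a polynomial algebra in `n − 1` variables. -/
theorem stmt12 (hn : 1 ≤ n) :
    Nonempty ((regularFnsZ k n ⊓ invFnsZ k n : Subalgebra k (Quadric k n → k))
      ≃ₐ[k] MvPolynomial (Fin (n - 1)) k) := by
  exact ⟨((AlgEquiv.ofInjective (S12.psi (k := k) (n := n)) (S12.psi_inj hn)).trans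
    (Subalgebra.equivOfEq _ _ (S12.psi_range_eq hn))).symm⟩
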